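/- For all a, b, m ∈ ℝ and σ ≥ 0, the integral of x ↦ Φ(a + b x) with respect to the Gaussian measure with mean m and variance σ² equals Φ((a + b m)/√(1 + b²σ²)); in particular, ∫_ℝ Φ(a + b x) φ(x) dx = Φ(a/√(1 + b²)). -/

import Mathlib

open MeasureTheory ProbabilityTheory
open scoped NNReal ENNReal Real

/-- Standard normal distribution function `Φ`. -/
noncomputable def stdGaussianCDF (x : ℝ) : ℝ :=
  ((gaussianReal 0 1) (Set.Iic x)).toReal

/-- Standard normal density `φ`. -/
noncomputable def stdGaussianPDF (x : ℝ) : ℝ :=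
  gaussianPDFReal 0 1 x

lemma gaussianReal_Iic_toReal (μ : ℝ) {v : ℝ≥0} (hv : v ≠ 0) (t : ℝ) :
    ((gaussianReal μ v) (Set.Iic t)).toReal = stdGaussianCDF ((t - μ) / Real.sqrt v) := by
  have hvpos : (0:ℝ) < Real.sqrt v := Real.sqrt_pos.mpr (by positivity)
  have hmap : (gaussianReal 0 1).map (fun x => Real.sqrt v * x + μ) = gaussianReal μ v := by
    have h1 : (gaussianReal 0 1).map (fun x => Real.sqrt v * x) = gaussianReal 0 v := by
      have := gaussianReal_map_const_mul (μ := 0) (v := 1) (Real.sqrt v)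
      simp only [mul_zero, mul_one] at this
      convert this using 2
      ext
      simp [Real.sq_sqrt v.coe_nonneg]
    have h2 := gaussianReal_map_add_const (μ := 0) (v := v) μ
    rw [← h1, Measure.map_map (by fun_prop) (by fun_prop)] at h2
    simpa [Function.comp_def, zero_add] using h2
  have hpre : (fun x => Real.sqrt v * x + μ) ⁻¹' (Set.Iic t) = Set.Iic ((t - μ) / Real.sqrt v) := by
    ext x
    simp only [Set.mem_preimage, Set.mem_Iic]
    rw [le_div_iff₀ hvpos]
    constructor <;> intro h <;> nlinarith
  rw [← hmap, Measure.map_apply (by fun_prop) measurableSet_Iic, hpre, stdGaussianCDF]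

lemma pdf_prod (b m σ : ℝ) (hσ : 0 < σ) (x y : ℝ) :
    gaussianPDFReal (-(b*m)) (Real.toNNReal (1+b^2*σ^2)) y *
      gaussianPDFReal ((m - b*σ^2*y)/(1+b^2*σ^2)) (Real.toNNReal (σ^2/(1+b^2*σ^2))) x
    = gaussianPDFReal (-(b*x)) 1 y * gaussianPDFReal m (Real.toNNReal (σ^2)) x := by
  have hV : (0:ℝ) < 1 + b^2*σ^2 := by positivity
  have hσ2 : (0:ℝ) < σ^2 := by positivity
  have hVne : (1 + b^2*σ^2) ≠ 0 := ne_of_gt hV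
  have hσ2ne : σ^2 ≠ 0 := ne_of_gt hσ2
  simp only [gaussianPDFReal, Real.coe_toNNReal _ hV.le, Real.coe_toNNReal _ hσ2.le,
    Real.coe_toNNReal _ (le_of_lt (div_pos hσ2 hV)), NNReal.coe_one]
  rw [mul_mul_mul_comm, mul_mul_mul_comm ((Real.sqrt (2*π*1))⁻¹)]
  congr 1
  · rw [← mul_inv, ← mul_inv, ← Real.sqrt_mul (by positivity), ← Real.sqrt_mul (by positivity)]
    congr 1
    field_simp
  · rw [← Real.exp_add, ← Real.exp_add]
    congr 1
    field_simp
    ring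

lemma stdGaussianCDF_mono : Monotone stdGaussianCDF := fun s t hst => by
  unfold stdGaussianCDF
  exact ENNReal.toReal_mono (measure_ne_top _ _) (measure_mono (Set.Iic_subset_Iic.mpr hst))

lemma stdGaussianCDF_meas : Measurable stdGaussianCDF := stdGaussianCDF_mono.measurable

lemma stdGaussianCDF_nonneg (t : ℝ) : 0 ≤ stdGaussianCDF t := ENNReal.toReal_nonneg

lemma key (a b m σ : ℝ) (hσ : 0 < σ) :
    ∫ x, stdGaussianCDF (a + b * x) ∂(gaussianReal m (Real.toNNReal (σ^2)))
      = stdGaussianCDF ((a + b*m) / Real.sqrt (1 + b^2*σ^2)) := by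
  have hσ2 : (0:ℝ) < σ^2 := by positivity
  have hV : (0:ℝ) < 1 + b^2*σ^2 := by positivity
  have hv : Real.toNNReal (σ^2) ≠ 0 := by
    simp [Real.toNNReal_eq_zero, not_le, hσ2, hσ.ne']
  have hVv : Real.toNNReal (1 + b^2*σ^2) ≠ 0 := by
    simp [Real.toNNReal_eq_zero, not_le, hV]
  have hcv : Real.toNNReal (σ^2/(1+b^2*σ^2)) ≠ 0 := by
    simp [Real.toNNReal_eq_zero, not_le]
    positivity
  -- step 1: Φ(a + b x) as measure of Iic a
  have hΦ : ∀ x : ℝ, stdGaussianCDF (a + b * x)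
      = ((gaussianReal (-(b*x)) 1) (Set.Iic a)).toReal := by
    intro x
    rw [gaussianReal_Iic_toReal _ one_ne_zero]
    norm_num [sub_neg_eq_add]
  -- step 2: to lintegral
  rw [integral_eq_lintegral_of_nonneg_ae (ae_of_all _ fun x => stdGaussianCDF_nonneg _)
    (stdGaussianCDF_meas.comp (by fun_prop)).aestronglyMeasurable]
  have h1 : ∀ x : ℝ, ENNReal.ofReal (stdGaussianCDF (a + b * x))
      = ∫⁻ y in Set.Iic a, gaussianPDF (-(b*x)) 1 y := by
    intro x
    rw [hΦ, ENNReal.ofReal_toReal (measure_ne_top _ _), gaussianReal_apply _ one_ne_zero]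
  simp_rw [h1]
  -- step 3: withDensity
  rw [gaussianReal_of_var_ne_zero _ hv,
    lintegral_withDensity_eq_lintegral_mul _ (measurable_gaussianPDF _ _)
      (by
        apply Measurable.lintegral_prod_right' (f := fun p : ℝ × ℝ => gaussianPDF (-(b*p.1)) 1 p.2)
        simp only [gaussianPDF_def, gaussianPDFReal_def]
        fun_prop)]
  simp only [Pi.mul_apply]
  have h2 : ∀ x : ℝ, gaussianPDF m (Real.toNNReal (σ^2)) x * ∫⁻ y in Set.Iic a, gaussianPDF (-(b*x)) 1 y
      = ∫⁻ y in Set.Iic a, gaussianPDF m (Real.toNNReal (σ^2)) x * gaussianPDF (-(b*x)) 1 y := by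
    intro x
    rw [lintegral_const_mul _ (by simp only [gaussianPDF_def, gaussianPDFReal_def]; fun_prop)]
  simp_rw [h2]
  rw [lintegral_lintegral_swap (by
      apply Measurable.aemeasurable
      simp only [gaussianPDF_def, gaussianPDFReal_def]
      fun_prop)]
  have h3 : ∀ y x : ℝ, gaussianPDF m (Real.toNNReal (σ^2)) x * gaussianPDF (-(b*x)) 1 y
      = gaussianPDF (-(b*m)) (Real.toNNReal (1+b^2*σ^2)) y *
        gaussianPDF ((m - b*σ^2*y)/(1+b^2*σ^2)) (Real.toNNReal (σ^2/(1+b^2*σ^2))) x := by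
    intro y x
    simp only [gaussianPDF_def]
    rw [← ENNReal.ofReal_mul (gaussianPDFReal_nonneg _ _ _),
      ← ENNReal.ofReal_mul (gaussianPDFReal_nonneg _ _ _), mul_comm (gaussianPDFReal m _ x),
      pdf_prod b m σ hσ x y]
  simp_rw [h3]
  have h4 : ∀ y : ℝ, ∫⁻ x, gaussianPDF (-(b*m)) (Real.toNNReal (1+b^2*σ^2)) y *
        gaussianPDF ((m - b*σ^2*y)/(1+b^2*σ^2)) (Real.toNNReal (σ^2/(1+b^2*σ^2))) x
      = gaussianPDF (-(b*m)) (Real.toNNReal (1+b^2*σ^2)) y := by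
    intro y
    rw [lintegral_const_mul _ (measurable_gaussianPDF _ _), lintegral_gaussianPDF_eq_one _ hcv,
      mul_one]
  simp_rw [h4]
  rw [← gaussianReal_apply _ hVv, gaussianReal_Iic_toReal _ hVv]
  rw [Real.coe_toNNReal _ hV.le, sub_neg_eq_add]


/-- Gaussian smoothing identity: the integral of `x ↦ Φ(a + b x)` with respect to the
Gaussian measure with mean `m` and variance `σ²` equals `Φ((a + b m)/√(1 + b²σ²))`;
in particular, `∫ Φ(a + b x) φ(x) dx = Φ(a/√(1 + b²))`. -/
theorem gaussian_smoothing_probit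
    (a b m σ : ℝ) (hσ : 0 ≤ σ) :
    (∫ x : ℝ, stdGaussianCDF (a + b * x) ∂(gaussianReal m (Real.toNNReal (σ ^ 2)))
        = stdGaussianCDF ((a + b * m) / Real.sqrt (1 + b ^ 2 * σ ^ 2)))
    ∧ (∫ x : ℝ, stdGaussianCDF (a + b * x) * stdGaussianPDF x
        = stdGaussianCDF (a / Real.sqrt (1 + b ^ 2))) := by
  constructor
  · rcases eq_or_lt_of_le hσ with h | h
    · simp only [← h, ne_eq, OfNat.ofNat_ne_zero, not_false_eq_true, zero_pow, Real.toNNReal_zero,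
        gaussianReal_zero_var, mul_zero, add_zero, Real.sqrt_one, div_one]
      rw [integral_dirac]
    · exact key a b m σ h
  · have hk := key a b 0 1 one_pos
    simp only [mul_zero, add_zero, one_pow, mul_one] at hk
    have h1 : Real.toNNReal (1:ℝ) = 1 := by norm_num
    rw [h1] at hk
    rw [← hk, gaussianReal_of_var_ne_zero _ one_ne_zero]
    have hd : gaussianPDF 0 1 = fun x => ((Real.toNNReal (gaussianPDFReal 0 1 x) : ℝ≥0) : ℝ≥0∞) :=
      rfl
    rw [hd, integral_withDensity_eq_integral_smul ((measurable_gaussianPDFReal 0 1).real_toNNReal)]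
    congr 1
    ext x
    rw [NNReal.smul_def, Real.coe_toNNReal _ (gaussianPDFReal_nonneg _ _ _), smul_eq_mul,
      mul_comm]
    rfl
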